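/- arXiv:2402.19457 — 2 statements merged into one kernel-verified Lean document; each statement's English description precedes it below -/
import Mathlib

section
/- The Bayes error of predicting a finite-valued random variable C from an observation S, namely P_e = 1 - E_S[max_c p(c|S)], satisfies the two-sided bound 1 - sqrt(E_S[exp(-2 H₂(C|S))]) ≤ P_e ≤ 1 - E_S[exp(-2 H₂(C|S))], where H₂(C|s) = -(1/2) log Σ_c p(c|s)² is the conditional second-order Rényi entropy. -/
/-- Two-sided bound on the Bayes error `P_e = 1 - E_S[max_c p(c|S)]` in terms of the
conditional second-order Rényi entropy `H₂(C|s) = -(1/2) log ∑_c p(c|s)²`: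
`1 - sqrt(E_S[exp(-2H₂(C|S))]) ≤ P_e ≤ 1 - E_S[exp(-2H₂(C|S))]`. -/
theorem stmt3 {C S : Type*} [Fintype C] [Nonempty C] [Fintype S]
    (q : S → ℝ) (hq0 : ∀ s, 0 ≤ q s) (hq1 : ∑ s, q s = 1)
    (p : S → C → ℝ) (hp0 : ∀ s c, 0 ≤ p s c) (hp1 : ∀ s, ∑ c, p s c = 1) :
    1 - Real.sqrt (∑ s, q s * Real.exp (-2 * (-(1 / 2) * Real.log (∑ c, (p s c) ^ 2))))
      ≤ 1 - ∑ s, q s * Finset.univ.sup' Finset.univ_nonempty (p s)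
    ∧ 1 - ∑ s, q s * Finset.univ.sup' Finset.univ_nonempty (p s)
      ≤ 1 - ∑ s, q s * Real.exp (-2 * (-(1 / 2) * Real.log (∑ c, (p s c) ^ 2))) := by
  set M : S → ℝ := fun s => Finset.univ.sup' Finset.univ_nonempty (p s) with hM
  have hfpos : ∀ s, 0 < ∑ c, (p s c) ^ 2 := by
    intro s
    obtain ⟨c, hc⟩ : ∃ c, 0 < p s c := by
      by_contra h
      push_neg at h
      have hle : (∑ c, p s c) ≤ 0 := Finset.sum_nonpos fun c _ => h c
      rw [hp1 s] at hle; norm_num at hle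
    calc (0:ℝ) < (p s c) ^ 2 := by positivity
      _ ≤ _ := Finset.single_le_sum (f := fun c' => (p s c') ^ 2) (fun c' _ => sq_nonneg _) (Finset.mem_univ c)
  have key : ∀ s, Real.exp (-2 * (-(1 / 2) * Real.log (∑ c, (p s c) ^ 2)))
      = ∑ c, (p s c) ^ 2 := by
    intro s
    rw [show (-2 : ℝ) * (-(1/2) * Real.log (∑ c, (p s c)^2))
        = Real.log (∑ c, (p s c)^2) by ring, Real.exp_log (hfpos s)]
  simp only [key]
  have hMle : ∀ s c, p s c ≤ M s := fun s c => Finset.le_sup' (p s) (Finset.mem_univ c)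
  have hM0 : ∀ s, 0 ≤ M s := by
    intro s
    obtain ⟨c⟩ := ‹Nonempty C›
    exact le_trans (hp0 s c) (hMle s c)
  -- pointwise: ∑ p² ≤ M
  have hfleM : ∀ s, ∑ c, (p s c) ^ 2 ≤ M s := by
    intro s
    calc ∑ c, (p s c) ^ 2 ≤ ∑ c, p s c * M s := by
          refine Finset.sum_le_sum fun c _ => ?_
          rw [sq]
          exact mul_le_mul_of_nonneg_left (hMle s c) (hp0 s c)
      _ = (∑ c, p s c) * M s := by rw [Finset.sum_mul]
      _ = M s := by rw [hp1 s, one_mul]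
  -- pointwise: M ≤ sqrt (∑ p²)
  have hMlesqrt : ∀ s, M s ≤ Real.sqrt (∑ c, (p s c) ^ 2) := by
    intro s
    obtain ⟨c, -, hc⟩ := Finset.exists_mem_eq_sup' (Finset.univ_nonempty (α := C)) (p s)
    have hMc : M s = p s c := hc
    have : (M s) ^ 2 ≤ ∑ c', (p s c') ^ 2 := by
      rw [hMc]
      exact Finset.single_le_sum (f := fun c' => (p s c') ^ 2) (fun c' _ => sq_nonneg _) (Finset.mem_univ c)
    calc M s = Real.sqrt ((M s) ^ 2) := (Real.sqrt_sq (hM0 s)).symm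
      _ ≤ _ := Real.sqrt_le_sqrt this
  constructor
  · -- need ∑ q M ≤ sqrt (∑ q f)
    have h1 : ∑ s, q s * M s ≤ ∑ s, q s * Real.sqrt (∑ c, (p s c) ^ 2) :=
      Finset.sum_le_sum fun s _ => mul_le_mul_of_nonneg_left (hMlesqrt s) (hq0 s)
    have h2 : ∑ s, q s * Real.sqrt (∑ c, (p s c) ^ 2)
        ≤ Real.sqrt (∑ s, q s * ∑ c, (p s c) ^ 2) := by
      have cs := Finset.sum_mul_sq_le_sq_mul_sq Finset.univ
        (fun s => Real.sqrt (q s)) (fun s => Real.sqrt (q s * ∑ c, (p s c) ^ 2))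
      have e1 : ∀ s : S, Real.sqrt (q s) * Real.sqrt (q s * ∑ c, (p s c) ^ 2)
          = q s * Real.sqrt (∑ c, (p s c) ^ 2) := by
        intro s
        rw [Real.sqrt_mul (hq0 s), ← mul_assoc, Real.mul_self_sqrt (hq0 s)]
      have e2 : ∀ s : S, Real.sqrt (q s) ^ 2 = q s := fun s => Real.sq_sqrt (hq0 s)
      have e3 : ∀ s : S, Real.sqrt (q s * ∑ c, (p s c) ^ 2) ^ 2 = q s * ∑ c, (p s c) ^ 2 :=
        fun s => Real.sq_sqrt (mul_nonneg (hq0 s) (le_of_lt (hfpos s)))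
      simp only [e1, e2, e3, hq1, one_mul] at cs
      have hnn : 0 ≤ ∑ s, q s * Real.sqrt (∑ c, (p s c) ^ 2) :=
        Finset.sum_nonneg fun s _ => mul_nonneg (hq0 s) (Real.sqrt_nonneg _)
      calc ∑ s, q s * Real.sqrt (∑ c, (p s c) ^ 2)
          = Real.sqrt ((∑ s, q s * Real.sqrt (∑ c, (p s c) ^ 2)) ^ 2) :=
            (Real.sqrt_sq hnn).symm
        _ ≤ _ := Real.sqrt_le_sqrt cs
    linarith [le_trans h1 h2]
  · have : ∑ s, q s * ∑ c, (p s c) ^ 2 ≤ ∑ s, q s * M s :=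
      Finset.sum_le_sum fun s _ => mul_le_mul_of_nonneg_left (hfleM s) (hq0 s)
    linarith
end

section
/- The Bayes error P_e of predicting a finite-valued random variable C from an observation S satisfies P_e ≤ 1 - exp(-H(C|S)), where H(C|S) = E_S[H(C|S=s)] is the conditional Shannon entropy. -/
lemma exp_neg_ent_le_max {C : Type*} [Fintype C] [Nonempty C]
    (p : C → ℝ) (hp0 : ∀ c, 0 ≤ p c) (hp1 : ∑ c, p c = 1) :
    Real.exp (-(-∑ c, p c * Real.log (p c))) ≤ Finset.univ.sup' Finset.univ_nonempty p := by
  set M := Finset.univ.sup' Finset.univ_nonempty p with hM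
  have hMpos : 0 < M := by
    by_contra h
    push_neg at h
    have : ∀ c, p c = 0 := fun c =>
      le_antisymm (le_trans (Finset.le_sup' p (Finset.mem_univ c)) h) (hp0 c)
    simp [this] at hp1
  have hsum : ∑ c, p c * Real.log (p c) ≤ Real.log M := by
    calc ∑ c, p c * Real.log (p c) ≤ ∑ c, p c * Real.log M := by
          apply Finset.sum_le_sum
          intro c _
          rcases eq_or_lt_of_le (hp0 c) with h | h
          · simp [← h]
          · exact mul_le_mul_of_nonneg_left
              (Real.log_le_log h (Finset.le_sup' p (Finset.mem_univ c))) (hp0 c)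
      _ = Real.log M := by rw [← Finset.sum_mul, hp1, one_mul]
  rw [neg_neg]
  calc Real.exp (∑ c, p c * Real.log (p c)) ≤ Real.exp (Real.log M) := Real.exp_le_exp.2 hsum
    _ = M := Real.exp_log hMpos

/-- The Bayes error `P_e = 1 - E_S[max_c p(c|S)]` satisfies
`P_e ≤ 1 - exp(-H(C|S))` where `H(C|S) = E_S[-∑_c p(c|s) log p(c|s)]`
is the conditional Shannon entropy. -/
theorem stmt4 {C S : Type*} [Fintype C] [Nonempty C] [Fintype S]
    (q : S → ℝ) (hq0 : ∀ s, 0 ≤ q s) (hq1 : ∑ s, q s = 1)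
    (p : S → C → ℝ) (hp0 : ∀ s c, 0 ≤ p s c) (hp1 : ∀ s, ∑ c, p s c = 1) :
    1 - ∑ s, q s * Finset.univ.sup' Finset.univ_nonempty (p s)
      ≤ 1 - Real.exp (-(∑ s, q s * (-∑ c, p s c * Real.log (p s c)))) := by
  have key : Real.exp (-(∑ s, q s * (-∑ c, p s c * Real.log (p s c))))
      ≤ ∑ s, q s * Finset.univ.sup' Finset.univ_nonempty (p s) := by
    have jensen : Real.exp (∑ s, q s • (-(-∑ c, p s c * Real.log (p s c))))
        ≤ ∑ s, q s • Real.exp (-(-∑ c, p s c * Real.log (p s c))) :=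
      convexOn_exp.map_sum_le (fun s _ => hq0 s) hq1 (fun s _ => Set.mem_univ _)
    have h2 : ∑ s, q s • Real.exp (-(-∑ c, p s c * Real.log (p s c)))
        ≤ ∑ s, q s * Finset.univ.sup' Finset.univ_nonempty (p s) := by
      apply Finset.sum_le_sum
      intro s _
      exact mul_le_mul_of_nonneg_left (exp_neg_ent_le_max (p s) (hp0 s) (hp1 s)) (hq0 s)
    refine le_trans (le_of_eq ?_) (jensen.trans h2)
    congr 1
    rw [← Finset.sum_neg_distrib]
    congr 1
    ext s
    simp [smul_eq_mul]
  linarith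
end
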